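/- Let n ≥ 2 be an integer, R > 0, and let φ : [R,∞) → ℝ be a solution of φ'(r) = (1+φ(r)²)(1 − (n−1)φ(r)/r). Then for every ε ∈ (0,1) there exists r₁ ≥ R such that (1−ε)·r/(n−1) ≤ φ(r) ≤ r/(n−1) for all r ≥ r₁; in particular φ(r)/r → 1/(n−1) as r → ∞, i.e. φ(r) = r/(n−1) + o(r). -/

import Mathlib

noncomputable section
open Set Filter Topology

lemma upper_barrier {a b : ℝ} {f f' : ℝ → ℝ} (hab : a ≤ b)
    (hd : ∀ r ∈ Icc a b, HasDerivWithinAt f (f' r) (Icc a b) r)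
    (h0 : f a ≤ 0) (hneg : ∀ r ∈ Icc a b, f r = 0 → f' r < 0) :
    f b ≤ 0 := by
  by_contra hb
  push_neg at hb
  have hcont : ContinuousOn f (Icc a b) := fun r hr => (hd r hr).continuousWithinAt
  set S := Icc a b ∩ f ⁻¹' (Iic 0) with hS
  have hSne : S.Nonempty := ⟨a, left_mem_Icc.2 hab, by simpa using h0⟩
  have hSbdd : BddAbove S := ⟨b, fun r hr => hr.1.2⟩
  have hSclosed : IsClosed S :=
    hcont.preimage_isClosed_of_isClosed isClosed_Icc isClosed_Iic
  set s := sSup S with hs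
  have hsS : s ∈ S := hSclosed.csSup_mem hSne hSbdd
  have hsab : s ∈ Icc a b := hsS.1
  have hfs : f s ≤ 0 := hsS.2
  have hsb : s < b := lt_of_le_of_ne hsab.2 (fun h => by rw [h] at hfs; linarith)
  have hgt : ∀ t ∈ Ioc s b, 0 < f t := by
    intro t ht
    by_contra h
    push_neg at h
    have htS : t ∈ S := ⟨⟨le_trans hsab.1 ht.1.le, ht.2⟩, h⟩
    exact absurd (le_csSup hSbdd htS) (not_le.2 ht.1)
  have hsub : Ioc s b ⊆ Icc a b \ {s} := fun t ht =>
    ⟨⟨le_trans hsab.1 ht.1.le, ht.2⟩, ne_of_gt ht.1⟩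
  have hnb : (𝓝[Ioc s b] s).NeBot := by
    rw [← mem_closure_iff_nhdsWithin_neBot, closure_Ioc hsb.ne]
    exact left_mem_Icc.2 hsb.le
  rcases lt_or_eq_of_le hfs with hlt | heq
  · have hten : Tendsto f (𝓝[Icc a b] s) (𝓝 (f s)) := hcont s hsab
    have hev : ∀ᶠ t in 𝓝[Icc a b] s, f t < 0 := hten (Iio_mem_nhds hlt)
    have hev2 : ∀ᶠ t in 𝓝[Ioc s b] s, f t < 0 :=
      hev.filter_mono (nhdsWithin_mono _ (Ioc_subset_Icc_self.trans (Icc_subset_Icc hsab.1 le_rfl)))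
    have hev3 : ∀ᶠ t in 𝓝[Ioc s b] s, t ∈ Ioc s b := eventually_mem_nhdsWithin
    rcases (hev2.and hev3).exists with ⟨t, ht1, ht2⟩
    exact absurd (hgt t ht2) (not_lt.2 ht1.le)
  · have hf' : f' s < 0 := hneg s hsab heq
    have hslope : Tendsto (slope f s) (𝓝[Icc a b \ {s}] s) (𝓝 (f' s)) :=
      hasDerivWithinAt_iff_tendsto_slope.1 (hd s hsab)
    have hev : ∀ᶠ t in 𝓝[Icc a b \ {s}] s, slope f s t < 0 := hslope (Iio_mem_nhds hf')
    have hev2 : ∀ᶠ t in 𝓝[Ioc s b] s, slope f s t < 0 :=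
      hev.filter_mono (nhdsWithin_mono _ hsub)
    have hev3 : ∀ᶠ t in 𝓝[Ioc s b] s, t ∈ Ioc s b := eventually_mem_nhdsWithin
    rcases (hev2.and hev3).exists with ⟨t, ht1, ht2⟩
    rw [slope_def_field] at ht1
    have hts : 0 < t - s := sub_pos.2 ht2.1
    have : f t - f s < 0 := by
      have := (div_neg_iff).1 ht1
      rcases this with ⟨h1, h2⟩ | ⟨h1, h2⟩
      · linarith
      · linarith
    rw [← heq] at this
    exact absurd (hgt t ht2) (not_lt.2 (by linarith))


section
variable {R c : ℝ} {φ : ℝ → ℝ}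

lemma exists_upper (hR : 0 < R) (hc : 1 ≤ c)
    (hφ : ∀ r ∈ Ici R, HasDerivWithinAt φ ((1 + φ r ^ 2) * (1 - c * φ r / r)) (Ici R) r) :
    ∃ r₀ ≥ R, φ r₀ ≤ r₀ / c := by
  have hc0 : 0 < c := by linarith
  by_contra hcon
  push_neg at hcon
  have hanti : AntitoneOn φ (Ici R) := by
    apply antitoneOn_of_deriv_nonpos (convex_Ici R)
      (fun r hr => (hφ r hr).continuousWithinAt)
    · intro x hx
      rw [interior_Ici] at hx
      exact (((hφ x (mem_Ici.2 (le_of_lt hx))).hasDerivAt (Ici_mem_nhds hx)).differentiableAt).differentiableWithinAt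
    · intro x hx
      rw [interior_Ici] at hx
      have hx0 : 0 < x := lt_trans hR hx
      have hda := (hφ x (mem_Ici.2 (le_of_lt hx))).hasDerivAt (Ici_mem_nhds hx)
      rw [hda.deriv]
      have h1 : x / c < φ x := hcon x hx.le
      have h2 : x < c * φ x := by
        have := (div_lt_iff₀ hc0).mp h1
        linarith
      have h3 : 1 - c * φ x / x ≤ 0 := by
        rw [sub_nonpos, le_div_iff₀ hx0]
        linarith
      nlinarith [sq_nonneg (φ x)]
  set r := max R (c * (φ R + 1)) with hr
  have hrR : R ≤ r := le_max_left _ _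
  have h2 : c * (φ R + 1) ≤ r := le_max_right _ _
  have h3 : φ r ≤ φ R := hanti (mem_Ici.2 le_rfl) (mem_Ici.2 hrR) hrR
  have h4 : r / c < φ r := hcon r hrR
  have h5 : φ R + 1 ≤ r / c := by rw [le_div_iff₀ hc0]; linarith
  linarith

lemma upper_persist (hR : 0 < R) (hc : 1 ≤ c)
    (hφ : ∀ r ∈ Ici R, HasDerivWithinAt φ ((1 + φ r ^ 2) * (1 - c * φ r / r)) (Ici R) r)
    {r₀ : ℝ} (hr₀R : R ≤ r₀) (h0 : φ r₀ ≤ r₀ / c) :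
    ∀ r ≥ r₀, φ r ≤ r / c := by
  have hc0 : 0 < c := by linarith
  intro b hb
  have hsub : Icc r₀ b ⊆ Ici R := fun t ht => le_trans hr₀R ht.1
  have key := upper_barrier (f := fun t => φ t - t / c)
    (f' := fun t => (1 + φ t ^ 2) * (1 - c * φ t / t) - 1 / c) hb
    (fun t ht => ((hφ t (hsub ht)).mono hsub).sub ((hasDerivWithinAt_id t _).div_const c))
    (by simp; linarith)
    (by
      intro t ht hft
      have ht0 : 0 < t := lt_of_lt_of_le hR (hsub ht)
      have hφt : φ t = t / c := by
        have : φ t - t / c = 0 := hft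
        linarith
      have hq : 1 - c * φ t / t = 0 := by rw [hφt]; field_simp; ring
      simp only [hq, mul_zero, zero_sub]
      rw [neg_lt, neg_zero]
      positivity)
  linarith

end


lemma exists_lower (hR : 0 < R) (hc : 1 ≤ c) (hε : 0 < ε) (hε1 : ε < 1)
    (hφ : ∀ r ∈ Ici R, HasDerivWithinAt φ ((1 + φ r ^ 2) * (1 - c * φ r / r)) (Ici R) r)
    (a : ℝ) (ha : R ≤ a) :
    ∃ r ≥ a, (1 - ε) * r / c ≤ φ r := by
  have hc0 : 0 < c := by linarith
  by_contra hcon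
  push_neg at hcon
  set b := a + Real.pi / ε with hb
  have hπ : 0 < Real.pi := Real.pi_pos
  have hπε : 0 < Real.pi / ε := by positivity
  have hab : a ≤ b := by rw [hb]; linarith
  have hsub : Icc a b ⊆ Ici R := fun t ht => le_trans ha ht.1
  have hder : ∀ x ∈ Ioo a b,
      HasDerivAt (fun y => Real.arctan (φ y) - ε * y)
        (1 / (1 + φ x ^ 2) * ((1 + φ x ^ 2) * (1 - c * φ x / x)) - ε) x := by
    intro x hx
    have hxR : R < x := lt_of_le_of_lt ha hx.1
    have hda := (hφ x hxR.le).hasDerivAt (Ici_mem_nhds hxR)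
    have harc : HasDerivAt (fun y => Real.arctan (φ y))
        (1 / (1 + φ x ^ 2) * ((1 + φ x ^ 2) * (1 - c * φ x / x))) x :=
      (Real.hasDerivAt_arctan (φ x)).comp x hda
    have hεr : HasDerivAt (fun y => ε * y) ε x := by
      simpa using (hasDerivAt_id x).const_mul ε
    exact harc.sub hεr
  have hmono : MonotoneOn (fun r => Real.arctan (φ r) - ε * r) (Icc a b) := by
    apply monotoneOn_of_deriv_nonneg (convex_Icc a b)
    · exact (Real.continuous_arctan.comp_continuousOn
        (fun t ht => ((hφ t (hsub ht)).continuousWithinAt).mono hsub)).sub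
        ((continuous_const.mul continuous_id).continuousOn)
    · intro x hx
      rw [interior_Icc] at hx
      exact (hder x hx).differentiableAt.differentiableWithinAt
    · intro x hx
      rw [interior_Icc] at hx
      rw [(hder x hx).deriv]
      have hx0 : 0 < x := lt_trans hR (lt_of_le_of_lt ha hx.1)
      have hp : 0 < 1 + φ x ^ 2 := by positivity
      have e : 1 / (1 + φ x ^ 2) * ((1 + φ x ^ 2) * (1 - c * φ x / x))
          = 1 - c * φ x / x := by field_simp
      rw [e]
      have h1 : φ x < (1 - ε) * x / c := hcon x hx.1.le
      have h2 : c * φ x < (1 - ε) * x := by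
        have := (lt_div_iff₀ hc0).mp h1
        linarith
      have h3 : c * φ x / x < 1 - ε := by
        rw [div_lt_iff₀ hx0]
        linarith
      linarith
  have hend : Real.arctan (φ a) - ε * a ≤ Real.arctan (φ b) - ε * b :=
    hmono (left_mem_Icc.2 hab) (right_mem_Icc.2 hab) hab
  have hba : ε * b - ε * a = Real.pi := by
    rw [hb]
    field_simp
    ring
  have h1 := Real.arctan_lt_pi_div_two (φ b)
  have h2 := Real.neg_pi_div_two_lt_arctan (φ a)
  linarith

lemma lower_persist (hR : 0 < R) (hc : 1 ≤ c) (hε : 0 < ε) (hε1 : ε < 1)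
    (hφ : ∀ r ∈ Ici R, HasDerivWithinAt φ ((1 + φ r ^ 2) * (1 - c * φ r / r)) (Ici R) r)
    {a : ℝ} (haR : R ≤ a) (haM : c / (ε * (1 - ε)) + 1 ≤ a)
    (h0 : (1 - ε) * a / c ≤ φ a) :
    ∀ r ≥ a, (1 - ε) * r / c ≤ φ r := by
  have hc0 : 0 < c := by linarith
  have hεε : 0 < ε * (1 - ε) := by nlinarith
  intro b hb
  have hsub : Icc a b ⊆ Ici R := fun t ht => le_trans haR ht.1
  have key := upper_barrier (f := fun t => (1 - ε) * t / c - φ t)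
    (f' := fun t => (1 - ε) / c - (1 + φ t ^ 2) * (1 - c * φ t / t)) hb
    (fun t ht => by
      have h1 : HasDerivWithinAt (fun u => (1 - ε) * u / c) ((1 - ε) / c) (Icc a b) t := by
        simpa using ((hasDerivWithinAt_id t (Icc a b)).const_mul (1 - ε)).div_const c
      exact h1.sub ((hφ t (hsub ht)).mono hsub))
    (sub_nonpos.mpr h0)
    (by
      intro t ht hft
      have ht0 : 0 < t := lt_of_lt_of_le hR (hsub ht)
      have hpos : 0 < c / (ε * (1 - ε)) := by positivity
      have ht1 : (1 : ℝ) ≤ t := by linarith [le_trans haM ht.1]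
      have hφt : φ t = (1 - ε) * t / c := by
        have h' : (1 - ε) * t / c - φ t = 0 := hft
        linarith
      have hq : 1 - c * φ t / t = ε := by
        rw [hφt]; field_simp; ring
      have htc : c < ε * (1 - ε) * t := by
        have h2 : c / (ε * (1 - ε)) < t := by linarith [le_trans haM ht.1]
        have := (div_lt_iff₀ hεε).mp h2
        linarith
      have ht2 : c < ε * (1 - ε) * t ^ 2 := by nlinarith
      show (1 - ε) / c - (1 + φ t ^ 2) * (1 - c * φ t / t) < 0
      rw [hq, hφt, sub_neg, div_lt_iff₀ hc0, div_pow, mul_pow]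
      have e3 : (1 + (1 - ε) ^ 2 * t ^ 2 / c ^ 2) * ε * c
          = ε * c + ε * (1 - ε) ^ 2 * t ^ 2 / c := by
        field_simp
      rw [e3]
      have h5 : (1 - ε) * c < ε * (1 - ε) ^ 2 * t ^ 2 := by nlinarith [ht2]
      have h6 : 1 - ε < ε * (1 - ε) ^ 2 * t ^ 2 / c := by
        rw [lt_div_iff₀ hc0]
        nlinarith [h5]
      nlinarith [h6, mul_pos hε hc0])
  linarith


theorem translator_ode_sublinear {n : ℕ} (hn : 2 ≤ n) (R : ℝ) (hR : 0 < R)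
    (φ : ℝ → ℝ)
    (hφ : ∀ r ∈ Ici R,
      HasDerivWithinAt φ ((1 + φ r ^ 2) * (1 - ((n : ℝ) - 1) * φ r / r)) (Ici R) r) :
    (∀ ε : ℝ, 0 < ε → ε < 1 → ∃ r₁ ≥ R, ∀ r ≥ r₁,
      (1 - ε) * r / ((n : ℝ) - 1) ≤ φ r ∧ φ r ≤ r / ((n : ℝ) - 1)) ∧
    Tendsto (fun r => φ r / r) atTop (nhds (1 / ((n : ℝ) - 1))) := by
  have hc : (1 : ℝ) ≤ (n : ℝ) - 1 := by
    have : (2 : ℝ) ≤ (n : ℝ) := by exact_mod_cast hn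
    linarith
  have hc0 : (0 : ℝ) < (n : ℝ) - 1 := by linarith
  have part1 : ∀ ε : ℝ, 0 < ε → ε < 1 → ∃ r₁ ≥ R, ∀ r ≥ r₁,
      (1 - ε) * r / ((n : ℝ) - 1) ≤ φ r ∧ φ r ≤ r / ((n : ℝ) - 1) := by
    intro ε hε hε1
    obtain ⟨r₀, hr₀R, hr₀⟩ := exists_upper hR hc hφ
    have hupper : ∀ r ≥ r₀, φ r ≤ r / ((n : ℝ) - 1) :=
      upper_persist hR hc hφ hr₀R hr₀
    set M := max (max R r₀) (((n : ℝ) - 1) / (ε * (1 - ε)) + 1) with hM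
    have hMR : R ≤ M := le_trans (le_max_left R r₀) (le_max_left _ _)
    obtain ⟨r₃, hr₃, hφ₃⟩ := exists_lower hR hc hε hε1 hφ M hMR
    have hr₃thr : ((n : ℝ) - 1) / (ε * (1 - ε)) + 1 ≤ r₃ :=
      le_trans (le_max_right _ _) hr₃
    have hlower : ∀ r ≥ r₃, (1 - ε) * r / ((n : ℝ) - 1) ≤ φ r :=
      lower_persist hR hc hε hε1 hφ (le_trans hMR hr₃) hr₃thr hφ₃
    have hr₀M : r₀ ≤ M := le_trans (le_max_right R r₀) (le_max_left _ _)
    exact ⟨r₃, le_trans hMR hr₃, fun r hr =>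
      ⟨hlower r hr, hupper r (le_trans (le_trans hr₀M hr₃) hr)⟩⟩
  refine ⟨part1, ?_⟩
  rw [Metric.tendsto_atTop]
  intro δ hδ
  set ε := min (1/2 : ℝ) (δ/2) with hεdef
  have hε : 0 < ε := lt_min (by norm_num) (by linarith)
  have hε1 : ε < 1 := lt_of_le_of_lt (min_le_left _ _) (by norm_num)
  have hεδ : ε ≤ δ / 2 := min_le_right _ _
  obtain ⟨r₁, hr₁R, hbound⟩ := part1 ε hε hε1
  refine ⟨max r₁ 1, fun r hr => ?_⟩
  have hr1 : r₁ ≤ r := le_trans (le_max_left _ _) hr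
  have hr0 : (0 : ℝ) < r := lt_of_lt_of_le one_pos (le_trans (le_max_right _ _) hr)
  obtain ⟨hl, hu⟩ := hbound r hr1
  have hA : φ r / r ≤ 1 / ((n : ℝ) - 1) := by
    rw [div_le_div_iff₀ hr0 hc0]
    rw [le_div_iff₀ hc0] at hu
    linarith
  have hB : (1 - ε) / ((n : ℝ) - 1) ≤ φ r / r := by
    rw [div_le_div_iff₀ hc0 hr0]
    rw [div_le_iff₀ hc0] at hl
    linarith
  have hdiff : 1 / ((n : ℝ) - 1) - (1 - ε) / ((n : ℝ) - 1) = ε / ((n : ℝ) - 1) := by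
    ring
  have hεc : ε / ((n : ℝ) - 1) ≤ ε := div_le_self hε.le hc
  rw [Real.dist_eq, abs_sub_lt_iff]
  constructor
  · linarith
  · linarith
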